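/- arXiv:1803.05953 — 2 statements merged into one kernel-verified Lean document; each statement's English description precedes it below -/
import Mathlib

section
/- For complex a1,b1,a2,b2 and nonnegative integers p1,p2,q1,q2,l: S_{a1,b1}^{a2,b2,q1+q2}(p1+p2, l) = Σ_{m=0}^{p2+q2} S_{a1,b1}^{a2,b2,q2}(p2, m) · S_{a1, a1·m+b1}^{a2, a2·m+b2, q1}(p1, l−m), with the convention that generalized Stirling numbers with negative second argument are 0. -/
open Finset

/-- Stirling numbers of the second kind. -/
def stirling2 : ℕ → ℕ → ℕ
  | 0, 0 => 1
  | 0, _ + 1 => 0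
  | _ + 1, 0 => 0
  | p + 1, k + 1 => stirling2 p k + (k + 1) * stirling2 p (k + 1)

/-- Unsigned Stirling numbers of the first kind. -/
def stirling1 : ℕ → ℕ → ℕ
  | 0, 0 => 1
  | 0, _ + 1 => 0
  | _ + 1, 0 => 0
  | p + 1, k + 1 => stirling1 p k + p * stirling1 p (k + 1)

/-- Stirling numbers of the second kind with integer second argument (0 when negative). -/
def stirling2Z (p : ℕ) (k : ℤ) : ℤ :=
  if k < 0 then 0 else stirling2 p k.toNat

/-- Generalized Stirling number of the second kind
`S_{a1,b1}^{a2,b2,p2}(p1,k)`. -/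
noncomputable def gsn (a1 b1 a2 b2 : ℂ) (p1 p2 k : ℕ) : ℂ :=
  (1 / (k.factorial : ℂ)) * ∑ j ∈ range (k + 1),
    (-1) ^ j * (k.choose j : ℂ) * (a1 * ((k : ℂ) - j) + b1) ^ p1 *
      (a2 * ((k : ℂ) - j) + b2) ^ p2

/-- Generalized Stirling number with integer index (0 when negative). -/
noncomputable def gsnZ (a1 b1 a2 b2 : ℂ) (p1 p2 : ℕ) (k : ℤ) : ℂ :=
  if k < 0 then 0 else gsn a1 b1 a2 b2 p1 p2 k.toNat

section StirlingAux

open fwdDiff Function Polynomial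

private lemma fwdDiff_shift' (f : ℂ → ℂ) (c : ℂ) :
    Δ_[(1:ℂ)] (fun x ↦ f (x + c)) = fun x ↦ (Δ_[(1:ℂ)] f) (x + c) := by
  funext x
  simp only [fwdDiff]
  ring_nf

private lemma fwdDiff_iter_shift' (f : ℂ → ℂ) (c : ℂ) (n : ℕ) :
    (Δ_[(1:ℂ)])^[n] (fun x ↦ f (x + c)) = fun x ↦ (Δ_[(1:ℂ)])^[n] f (x + c) := by
  induction n generalizing f with
  | zero => simp
  | succ n IH =>
    rw [Function.iterate_succ_apply, fwdDiff_shift', IH]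
    funext x
    rw [Function.iterate_succ_apply]

private lemma fwdDiff_mul' (f g : ℂ → ℂ) :
    Δ_[(1:ℂ)] (f * g) = f * Δ_[(1:ℂ)] g + Δ_[(1:ℂ)] f * (fun x ↦ g (x + 1)) := by
  funext x
  simp only [fwdDiff, Pi.add_apply, Pi.mul_apply]
  ring

private lemma fwdDiff_leibniz (n : ℕ) (f g : ℂ → ℂ) (y : ℂ) :
    (Δ_[(1:ℂ)])^[n] (f * g) y =
      ∑ m ∈ range (n + 1),
        (n.choose m : ℂ) * (Δ_[(1:ℂ)])^[m] f y * (Δ_[(1:ℂ)])^[n - m] g (y + m) := by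
  induction n generalizing f g with
  | zero => simp
  | succ n IH =>
    rw [Function.iterate_succ_apply, fwdDiff_mul']
    rw [show (Δ_[(1:ℂ)])^[n] (f * Δ_[(1:ℂ)] g + Δ_[(1:ℂ)] f * fun x ↦ g (x + 1)) y
        = (Δ_[(1:ℂ)])^[n] (f * Δ_[(1:ℂ)] g) y
          + (Δ_[(1:ℂ)])^[n] (Δ_[(1:ℂ)] f * fun x ↦ g (x + 1)) y by
      rw [fwdDiff_iter_add]; rfl]
    rw [IH, IH]
    have key : ∀ m ∈ range (n + 1),
        (n.choose m : ℂ) * (Δ_[(1:ℂ)])^[m] f y * (Δ_[(1:ℂ)])^[n - m] (Δ_[(1:ℂ)] g) (y + m)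
        = (n.choose m : ℂ) * (Δ_[(1:ℂ)])^[m] f y * (Δ_[(1:ℂ)])^[n + 1 - m] g (y + m) := by
      intro m hm
      rw [mem_range] at hm
      rw [show n + 1 - m = n - m + 1 by omega, Function.iterate_succ_apply]
    have key2 : ∀ m ∈ range (n + 1),
        (n.choose m : ℂ) * (Δ_[(1:ℂ)])^[m] (Δ_[(1:ℂ)] f) y
            * (Δ_[(1:ℂ)])^[n - m] (fun x ↦ g (x + 1)) (y + m)
        = (n.choose m : ℂ) * (Δ_[(1:ℂ)])^[m + 1] f y * (Δ_[(1:ℂ)])^[n - m] g (y + m + 1) := by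
      intro m _
      simp only [Function.iterate_succ_apply, fwdDiff_iter_shift']
    rw [Finset.sum_congr rfl key, Finset.sum_congr rfl key2]
    have target : ∑ m ∈ range (n + 1 + 1),
        ((n + 1).choose m : ℂ) * (Δ_[(1:ℂ)])^[m] f y * (Δ_[(1:ℂ)])^[n + 1 - m] g (y + m)
        = ∑ m ∈ range (n + 1),
            (n.choose m : ℂ) * (Δ_[(1:ℂ)])^[m] f y * (Δ_[(1:ℂ)])^[n + 1 - m] g (y + m)
          + ∑ m ∈ range (n + 1),
            (n.choose m : ℂ) * (Δ_[(1:ℂ)])^[m + 1] f y * (Δ_[(1:ℂ)])^[n - m] g (y + m + 1) := by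
      set t : ℕ → ℂ := fun m ↦ (Δ_[(1:ℂ)])^[m] f y * (Δ_[(1:ℂ)])^[n + 1 - m] g (y + m) with ht
      have e1 : ∑ m ∈ range (n + 1 + 1), ((n + 1).choose m : ℂ) * (Δ_[(1:ℂ)])^[m] f y
          * (Δ_[(1:ℂ)])^[n + 1 - m] g (y + m)
          = ∑ m ∈ range (n + 1 + 1), ((n + 1).choose m : ℂ) * t m := by
        apply Finset.sum_congr rfl; intro m _; rw [ht]; ring
      rw [e1]
      rw [Finset.sum_range_succ' (fun m ↦ ((n + 1).choose m : ℂ) * t m) (n + 1)]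
      have e2 : ∀ m ∈ range (n + 1), ((n + 1).choose (m + 1) : ℂ) * t (m + 1)
          = (n.choose m : ℂ) * t (m + 1) + (n.choose (m + 1) : ℂ) * t (m + 1) := by
        intro m _
        rw [Nat.choose_succ_succ]
        push_cast
        ring
      rw [Finset.sum_congr rfl e2, Finset.sum_add_distrib]
      have e3 : ∑ m ∈ range (n + 1), (n.choose (m + 1) : ℂ) * t (m + 1)
          + ((n + 1).choose 0 : ℂ) * t 0
          = ∑ m ∈ range (n + 1), (n.choose m : ℂ) * t m := by
        rw [show ((n + 1).choose 0 : ℂ) = ((n.choose 0 : ℕ) : ℂ) by simp]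
        rw [← Finset.sum_range_succ' (fun m ↦ (n.choose m : ℂ) * t m) (n + 1)]
        rw [Finset.sum_range_succ]
        simp [Nat.choose_eq_zero_of_lt (Nat.lt_succ_self n)]
      have e4 : ∑ m ∈ range (n + 1), (n.choose m : ℂ) * t (m + 1)
          = ∑ m ∈ range (n + 1), (n.choose m : ℂ) * (Δ_[(1:ℂ)])^[m + 1] f y
              * (Δ_[(1:ℂ)])^[n - m] g (y + m + 1) := by
        apply Finset.sum_congr rfl; intro m hm
        rw [mem_range] at hm
        rw [ht]
        simp only []
        rw [show n + 1 - (m + 1) = n - m by omega]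
        push_cast
        ring_nf
      have e5 : ∑ m ∈ range (n + 1), (n.choose m : ℂ) * t m
          = ∑ m ∈ range (n + 1), (n.choose m : ℂ) * (Δ_[(1:ℂ)])^[m] f y
              * (Δ_[(1:ℂ)])^[n + 1 - m] g (y + m) := by
        apply Finset.sum_congr rfl; intro m _; rw [ht]; ring
      linear_combination e3 + e4 + e5
    linear_combination target.symm

private lemma fwdDiff_polyeval (P : Polynomial ℂ) :
    Δ_[(1:ℂ)] (fun x ↦ P.eval x) = fun x ↦ (P.comp (X + C 1) - P).eval x := by
  funext x
  simp [fwdDiff, eval_comp]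

private lemma fwdDiff_iter_zero_fun (n : ℕ) :
    (Δ_[(1:ℂ)])^[n] (fun _ ↦ (0:ℂ)) = fun _ ↦ (0:ℂ) := by
  induction n with
  | zero => rfl
  | succ n IH => rw [Function.iterate_succ_apply, show Δ_[(1:ℂ)] (fun _ ↦ (0:ℂ)) = fun _ ↦ (0:ℂ) by
      funext x; simp [fwdDiff], IH]

private lemma fwdDiff_iter_poly_zero (n : ℕ) : ∀ P : Polynomial ℂ, P.natDegree < n →
    (Δ_[(1:ℂ)])^[n] (fun x ↦ P.eval x) = fun _ ↦ (0:ℂ) := by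
  induction n with
  | zero => intro P h; exact absurd h (Nat.not_lt_zero _)
  | succ n IH =>
    intro P hP
    rw [Function.iterate_succ_apply, fwdDiff_polyeval]
    set Q := P.comp (X + C 1) - P with hQdef
    by_cases hQ : Q = 0
    · rw [hQ]
      simp only [eval_zero]
      exact fwdDiff_iter_zero_fun n
    · apply IH
      have hP0 : P ≠ 0 := by
        rintro rfl
        simp [hQdef] at hQ
      have hq1 : (X + C 1 : ℂ[X]).natDegree = 1 := natDegree_X_add_C 1
      have hcomp0 : P.comp (X + C 1) ≠ 0 := by
        intro h
        rcases Polynomial.comp_eq_zero_iff.mp h with h | ⟨_, h2⟩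
        · exact hP0 h
        · have := congrArg natDegree h2
          rw [hq1, natDegree_C] at this
          exact one_ne_zero this
      have hdeg : (P.comp (X + C 1)).degree = P.degree := by
        rw [degree_eq_natDegree hcomp0, degree_eq_natDegree hP0, natDegree_comp, hq1, mul_one]
      have hlc : (P.comp (X + C 1)).leadingCoeff = P.leadingCoeff := by
        rw [Polynomial.leadingCoeff_comp (by rw [hq1]; exact one_ne_zero),
          leadingCoeff_X_add_C, one_pow, mul_one]
      have h1 : Q.degree < P.degree := by
        have := Polynomial.degree_sub_lt hdeg hcomp0 hlc
        rwa [hdeg] at this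
      have h2 : Q.natDegree < P.natDegree := Polynomial.natDegree_lt_natDegree hQ h1
      omega

private lemma gsn_eq_fwdDiff (a1 b1 a2 b2 : ℂ) (p q k : ℕ) :
    gsn a1 b1 a2 b2 p q k = (1 / (k.factorial : ℂ)) *
      (Δ_[(1:ℂ)])^[k] (fun x ↦ (a1 * x + b1) ^ p * (a2 * x + b2) ^ q) 0 := by
  rw [gsn, fwdDiff_iter_eq_sum_shift]
  congr 1
  rw [← Finset.sum_range_reflect]
  apply Finset.sum_congr rfl
  intro j hj
  rw [mem_range] at hj
  have hjk : j ≤ k := by omega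
  simp only [Nat.add_sub_cancel]
  rw [Nat.choose_symm hjk, Nat.cast_sub hjk, zsmul_eq_mul]
  push_cast
  simp only [nsmul_eq_mul, mul_one, zero_add]
  ring_nf

private lemma gsn_shift (a1 b1 a2 b2 c : ℂ) (p q k : ℕ) :
    gsn a1 (a1 * c + b1) a2 (a2 * c + b2) p q k = (1 / (k.factorial : ℂ)) *
      (Δ_[(1:ℂ)])^[k] (fun x ↦ (a1 * x + b1) ^ p * (a2 * x + b2) ^ q) c := by
  rw [gsn_eq_fwdDiff]
  congr 1
  have e : (fun x ↦ (a1 * x + (a1 * c + b1)) ^ p * (a2 * x + (a2 * c + b2)) ^ q)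
      = fun x ↦ (fun y ↦ (a1 * y + b1) ^ p * (a2 * y + b2) ^ q) (x + c) := by
    funext x; ring_nf
  rw [e, fwdDiff_iter_shift' (fun y ↦ (a1 * y + b1) ^ p * (a2 * y + b2) ^ q) c k]
  simp

end StirlingAux

open fwdDiff Function in
theorem stmt15 (a1 b1 a2 b2 : ℂ) (p1 p2 q1 q2 l : ℕ) :
    gsn a1 b1 a2 b2 (p1 + p2) (q1 + q2) l =
      ∑ m ∈ range (p2 + q2 + 1),
        gsn a1 b1 a2 b2 p2 q2 m *
          gsnZ a1 (a1 * m + b1) a2 (a2 * m + b2) p1 q1 ((l : ℤ) - m) := by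
  classical
  set G : ℂ → ℂ := fun x ↦ (a1 * x + b1) ^ p2 * (a2 * x + b2) ^ q2 with hG
  set H : ℂ → ℂ := fun x ↦ (a1 * x + b1) ^ p1 * (a2 * x + b2) ^ q1 with hH
  -- vanishing of high differences of G
  have hvan : ∀ m : ℕ, p2 + q2 < m → (Δ_[(1:ℂ)])^[m] G 0 = 0 := by
    intro m hm
    have hGe : G = fun x ↦ ((Polynomial.C a1 * Polynomial.X + Polynomial.C b1) ^ p2 *
        (Polynomial.C a2 * Polynomial.X + Polynomial.C b2) ^ q2).eval x := by
      funext x; simp [hG]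
    have hdeg : ((Polynomial.C a1 * Polynomial.X + Polynomial.C b1) ^ p2 *
        (Polynomial.C a2 * Polynomial.X + Polynomial.C b2) ^ q2).natDegree < m := by
      refine lt_of_le_of_lt (le_trans (Polynomial.natDegree_mul_le) ?_) hm
      have d1 : ((Polynomial.C a1 * Polynomial.X + Polynomial.C b1 : Polynomial ℂ) ^ p2).natDegree
          ≤ p2 := le_trans Polynomial.natDegree_pow_le (by
            have := Polynomial.natDegree_linear_le (a := a1) (b := b1)
            nlinarith)
      have d2 : ((Polynomial.C a2 * Polynomial.X + Polynomial.C b2 : Polynomial ℂ) ^ q2).natDegree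
          ≤ q2 := le_trans Polynomial.natDegree_pow_le (by
            have := Polynomial.natDegree_linear_le (a := a2) (b := b2)
            nlinarith)
      omega
    rw [hGe, fwdDiff_iter_poly_zero m _ hdeg]
  -- Leibniz expansion of the LHS
  have hfg : (fun x ↦ (a1 * x + b1) ^ (p1 + p2) * (a2 * x + b2) ^ (q1 + q2)) = G * H := by
    funext x
    simp only [hG, hH, Pi.mul_apply]
    rw [pow_add, pow_add]
    ring
  have hL : gsn a1 b1 a2 b2 (p1 + p2) (q1 + q2) l = (1 / (l.factorial : ℂ)) *
      ∑ m ∈ range (l + 1),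
        (l.choose m : ℂ) * (Δ_[(1:ℂ)])^[m] G 0 * (Δ_[(1:ℂ)])^[l - m] H ((0:ℂ) + m) := by
    rw [gsn_eq_fwdDiff, hfg, fwdDiff_leibniz]
  rw [hL]
  -- extend both sums to range (l + (p2 + q2) + 1)
  set N := l + (p2 + q2) with hN
  have hsub1 : range (l + 1) ⊆ range (N + 1) := by
    apply Finset.range_subset_range.mpr; omega
  have hsub2 : range (p2 + q2 + 1) ⊆ range (N + 1) := by
    apply Finset.range_subset_range.mpr; omega
  have hext1 : ∑ m ∈ range (l + 1),
      (l.choose m : ℂ) * (Δ_[(1:ℂ)])^[m] G 0 * (Δ_[(1:ℂ)])^[l - m] H ((0:ℂ) + m)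
      = ∑ m ∈ range (N + 1),
      (l.choose m : ℂ) * (Δ_[(1:ℂ)])^[m] G 0 * (Δ_[(1:ℂ)])^[l - m] H ((0:ℂ) + m) := by
    apply Finset.sum_subset hsub1
    intro m _ hm
    rw [mem_range, not_lt] at hm
    rw [Nat.choose_eq_zero_of_lt (by omega)]
    simp
  have hext2 : ∑ m ∈ range (p2 + q2 + 1),
      gsn a1 b1 a2 b2 p2 q2 m * gsnZ a1 (a1 * m + b1) a2 (a2 * m + b2) p1 q1 ((l : ℤ) - m)
      = ∑ m ∈ range (N + 1),
      gsn a1 b1 a2 b2 p2 q2 m * gsnZ a1 (a1 * m + b1) a2 (a2 * m + b2) p1 q1 ((l : ℤ) - m) := by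
    apply Finset.sum_subset hsub2
    intro m _ hm
    rw [mem_range, not_lt] at hm
    rw [gsn_eq_fwdDiff, hvan m (by omega)]
    simp
  rw [hext1, hext2, Finset.mul_sum]
  apply Finset.sum_congr rfl
  intro m _
  by_cases hml : m ≤ l
  · -- gsnZ is a genuine gsn
    have hnneg : ¬ ((l : ℤ) - m < 0) := by omega
    have htn : ((l : ℤ) - m).toNat = l - m := by omega
    rw [gsnZ, if_neg hnneg, htn, gsn_eq_fwdDiff a1 b1 a2 b2 p2 q2 m,
      gsn_shift a1 b1 a2 b2 (m : ℂ) p1 q1 (l - m)]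
    have hfact : ((l.choose m : ℕ) : ℂ) * ((m.factorial : ℕ) : ℂ)
        * (((l - m).factorial : ℕ) : ℂ) = ((l.factorial : ℕ) : ℂ) := by
      rw [← Nat.cast_mul, ← Nat.cast_mul, Nat.choose_mul_factorial_mul_factorial hml]
    have h1 : ((l.factorial : ℕ) : ℂ) ≠ 0 := Nat.cast_ne_zero.mpr (Nat.factorial_ne_zero l)
    have h2 : ((m.factorial : ℕ) : ℂ) ≠ 0 := Nat.cast_ne_zero.mpr (Nat.factorial_ne_zero m)
    have h3 : (((l - m).factorial : ℕ) : ℂ) ≠ 0 :=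
      Nat.cast_ne_zero.mpr (Nat.factorial_ne_zero (l - m))
    rw [zero_add, ← hG, ← hH]
    field_simp
    linear_combination ((Δ_[(1:ℂ)])^[m] G 0 * (Δ_[(1:ℂ)])^[l - m] H (m : ℂ)) * hfact
  · -- both sides vanish
    have hneg : (l : ℤ) - m < 0 := by omega
    rw [gsnZ, if_pos hneg, mul_zero, Nat.choose_eq_zero_of_lt (by omega)]
    simp
end

section
/- For nonnegative integers p1, p2 and l: S(p1+p2, l) = Σ_{m=0}^{p2} Σ_{j=0}^{p1} C(p1,j) m^{p1−j} S(j, l−m) S(p2, m), where S are the Stirling numbers of the second kind and S(j,k)=0 for k<0. -/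
open Finset

lemma stirling2_eq_zero : ∀ {p k : ℕ}, p < k → stirling2 p k = 0 := by
  intro p
  induction p with
  | zero => intro k h; cases k with
    | zero => omega
    | succ k => rfl
  | succ p ih =>
    intro k h
    cases k with
    | zero => omega
    | succ k =>
      simp only [stirling2]
      rw [ih (by omega), ih (by omega)]
      ring

lemma stirling2Z_neg (p : ℕ) {k : ℤ} (h : k < 0) : stirling2Z p k = 0 := if_pos h

lemma stirling2Z_natCast (p n : ℕ) : stirling2Z p (n : ℤ) = stirling2 p n := by
  simp [stirling2Z]

lemma stirling2Z_rec (j : ℕ) (k : ℤ) :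
    stirling2Z (j+1) k = stirling2Z j (k-1) + k * stirling2Z j k := by
  rcases lt_trichotomy k 0 with h | h | h
  · rw [stirling2Z_neg _ h, stirling2Z_neg _ (by linarith), stirling2Z_neg _ h]; ring
  · subst h
    simp [stirling2Z, stirling2]
  · obtain ⟨n, rfl⟩ : ∃ n : ℕ, k = (n:ℤ)+1 := ⟨(k-1).toNat, by omega⟩
    rw [show ((n:ℤ)+1) - 1 = (n:ℤ) by ring, show ((n:ℤ)+1) = ((n+1:ℕ):ℤ) by push_cast; ring,
        stirling2Z_natCast, stirling2Z_natCast, stirling2Z_natCast]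
    simp only [stirling2]
    push_cast; ring

lemma stirling2Z_zero_left (k : ℤ) : stirling2Z 0 k = if k = 0 then 1 else 0 := by
  rcases lt_trichotomy k 0 with h | h | h
  · rw [stirling2Z_neg _ h, if_neg (by omega)]
  · subst h; simp [stirling2Z, stirling2]
  · obtain ⟨t, rfl⟩ : ∃ t : ℕ, k = (t:ℤ)+1 := ⟨(k-1).toNat, by omega⟩
    rw [show ((t:ℤ)+1) = ((t+1:ℕ):ℤ) by push_cast; ring, stirling2Z_natCast,
        if_neg (by omega)]
    rfl

lemma inner_step (p1 m : ℕ) (l : ℤ) :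
    ∑ j ∈ range (p1+2), ((p1+1).choose j : ℤ) * (m:ℤ)^(p1+1-j) * stirling2Z j (l - m)
    = (∑ j ∈ range (p1+1), (p1.choose j : ℤ) * (m:ℤ)^(p1-j) * stirling2Z j ((l-1) - m))
      + l * ∑ j ∈ range (p1+1), (p1.choose j : ℤ) * (m:ℤ)^(p1-j) * stirling2Z j (l - m) := by
  have claim :
      (∑ j ∈ range (p1+1), (p1.choose (j+1) : ℤ) * (m:ℤ)^(p1-j) * stirling2Z (j+1) (l - m))
        + (m:ℤ)^(p1+1) * stirling2Z 0 (l - m)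
      = ∑ j ∈ range (p1+1), (p1.choose j : ℤ) * ((m:ℤ)^(p1-j) * m) * stirling2Z j (l - m) := by
    have h1 : ∑ j ∈ range (p1+1), (p1.choose j : ℤ) * ((m:ℤ)^(p1-j) * m) * stirling2Z j (l - m)
        = ∑ j ∈ range (p1+1), (p1.choose j : ℤ) * (m:ℤ)^(p1+1-j) * stirling2Z j (l - m) := by
      apply Finset.sum_congr rfl
      intro j hj
      have hj' : j ≤ p1 := by simpa [Nat.lt_succ_iff] using hj
      rw [show p1 + 1 - j = (p1 - j) + 1 by omega, pow_succ]
    rw [h1]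
    conv_lhs => rw [Finset.sum_range_succ]
    conv_rhs => rw [Finset.sum_range_succ']
    simp [Nat.succ_sub_succ, Nat.choose_succ_self]
  rw [Finset.sum_range_succ']
  have h2 : ∀ j ∈ range (p1+1),
      ((p1+1).choose (j+1) : ℤ) * (m:ℤ)^(p1+1-(j+1)) * stirling2Z (j+1) (l - m)
      = ((p1.choose j : ℤ) * (m:ℤ)^(p1-j) * stirling2Z j ((l-1) - m)
          + l * ((p1.choose j : ℤ) * (m:ℤ)^(p1-j) * stirling2Z j (l - m)))
        + ((p1.choose (j+1) : ℤ) * (m:ℤ)^(p1-j) * stirling2Z (j+1) (l - m)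
          - (p1.choose j : ℤ) * ((m:ℤ)^(p1-j) * m) * stirling2Z j (l - m)) := by
    intro j hj
    rw [Nat.succ_sub_succ, Nat.choose_succ_succ']
    rw [show stirling2Z (j+1) (l - m) = stirling2Z j ((l-1) - m) + (l - m) * stirling2Z j (l - m) by
      rw [stirling2Z_rec]; ring_nf]
    push_cast
    ring
  rw [Finset.sum_congr rfl h2, Finset.sum_add_distrib, Finset.sum_add_distrib,
      Finset.sum_sub_distrib, ← Finset.mul_sum]
  have : (↑((p1+1).choose 0) : ℤ) * (m:ℤ)^(p1+1-0) * stirling2Z 0 (l - m)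
      = (m:ℤ)^(p1+1) * stirling2Z 0 (l - m) := by simp
  rw [this]
  linarith [claim]

lemma key (p2 : ℕ) : ∀ (p1 : ℕ) (l : ℤ),
    ∑ m ∈ range (p2 + 1), ∑ j ∈ range (p1 + 1),
        (p1.choose j : ℤ) * (m : ℤ) ^ (p1 - j) * stirling2Z j (l - m) *
          stirling2 p2 m = stirling2Z (p1 + p2) l := by
  intro p1
  induction p1 with
  | zero =>
    intro l
    have hterm : ∀ m ∈ range (p2 + 1),
        ∑ j ∈ range (0 + 1), (Nat.choose 0 j : ℤ) * (m : ℤ) ^ (0 - j) * stirling2Z j (l - m) *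
          stirling2 p2 m = if l = (m:ℤ) then (stirling2 p2 m : ℤ) else 0 := by
      intro m hm
      rw [Finset.sum_range_one]
      rw [stirling2Z_zero_left]
      by_cases h : l - (m:ℤ) = 0
      · rw [if_pos h, if_pos (by omega)]; simp
      · rw [if_neg h, if_neg (by omega)]; ring
    rw [Finset.sum_congr rfl hterm]
    rcases le_or_gt 0 l with hl | hl
    · obtain ⟨n, rfl⟩ : ∃ n : ℕ, l = (n:ℤ) := ⟨l.toNat, by omega⟩
      have : ∀ m ∈ range (p2+1),
          (if (n:ℤ) = (m:ℤ) then (stirling2 p2 m : ℤ) else 0)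
            = if n = m then (stirling2 p2 m : ℤ) else 0 := by
        intro m hm
        congr 1
        simp [Nat.cast_inj]
      rw [Finset.sum_congr rfl this, Finset.sum_ite_eq]
      rw [zero_add, stirling2Z_natCast]
      by_cases hn : n ∈ range (p2+1)
      · rw [if_pos hn]
      · rw [if_neg hn, stirling2_eq_zero (by simp [Finset.mem_range] at hn; omega)]
        simp
    · rw [stirling2Z_neg _ (by omega)]
      apply Finset.sum_eq_zero
      intro m hm
      rw [if_neg (by omega)]
  | succ p1 ih =>
    intro l
    have step : ∀ m ∈ range (p2 + 1),
        ∑ j ∈ range (p1 + 1 + 1), ((p1+1).choose j : ℤ) * (m : ℤ) ^ (p1 + 1 - j) *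
            stirling2Z j (l - m) * stirling2 p2 m
        = (∑ j ∈ range (p1 + 1), (p1.choose j : ℤ) * (m : ℤ) ^ (p1 - j) *
              stirling2Z j ((l-1) - m) * stirling2 p2 m)
          + l * ∑ j ∈ range (p1 + 1), (p1.choose j : ℤ) * (m : ℤ) ^ (p1 - j) *
              stirling2Z j (l - m) * stirling2 p2 m := by
      intro m hm
      rw [← Finset.sum_mul, ← Finset.sum_mul, ← Finset.sum_mul,
          show p1 + 1 + 1 = p1 + 2 from rfl, inner_step p1 m l]
      ring
    rw [Finset.sum_congr rfl step, Finset.sum_add_distrib, ← Finset.mul_sum, ih (l-1), ih l,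
        show p1 + 1 + p2 = (p1 + p2) + 1 by omega, stirling2Z_rec]

theorem stmt16 (p1 p2 l : ℕ) :
    (stirling2 (p1 + p2) l : ℤ) =
      ∑ m ∈ range (p2 + 1), ∑ j ∈ range (p1 + 1),
        (p1.choose j : ℤ) * (m : ℤ) ^ (p1 - j) * stirling2Z j ((l : ℤ) - m) *
          stirling2 p2 m := by
  rw [key p2 p1 (l : ℤ), stirling2Z_natCast]
end
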